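/- arXiv:1511.00284 — 4 statements merged into one kernel-verified Lean document; each statement's English description precedes it below -/
import Mathlib

section
/- Let C = γγᵀ + Λ with Λ = diag(σ₁²,...,σ_N²), 0 < σᵢ² ≤ c₅. Let 𝔢₁ be a unit eigenvector of C for the largest eigenvalue λ₁, normalized so that γᵀ𝔢₁ ≥ 0. Then ‖𝔢₁ − γ/‖γ‖‖² ≤ 2c₅/‖γ‖². -/
open Matrix Finset

/-- For `C = γγᵀ + Λ` with `Λ` diagonal with entries in `(0, c₅]`,
if `𝔢₁` is a unit eigenvector for the largest eigenvalue `λ₁`, normalized so that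
`γᵀ𝔢₁ ≥ 0`, then `‖𝔢₁ − γ/‖γ‖‖² ≤ 2 c₅ / ‖γ‖²`. -/
theorem top_eigenvector_close_to_gamma
    (N : ℕ) (γ : Fin N → ℝ) (σ : Fin N → ℝ) (c₅ : ℝ)
    (hσ : ∀ i, 0 < σ i ∧ σ i ≤ c₅)
    (hγ : γ ≠ 0)
    (C : Matrix (Fin N) (Fin N) ℝ)
    (hC : C = Matrix.of (fun i j => γ i * γ j + if i = j then σ i else 0))
    (lam1 : ℝ) (e1 : Fin N → ℝ)
    (he1norm : (∑ i, e1 i ^ 2) = 1)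
    (heig : C *ᵥ e1 = lam1 • e1)
    (hmax : IsGreatest
      {x : ℝ | ∃ v : Fin N → ℝ, (∑ i, v i ^ 2) = 1 ∧ x = v ⬝ᵥ (C *ᵥ v)} lam1)
    (hsign : 0 ≤ γ ⬝ᵥ e1) :
    (∑ i, (e1 i - γ i / Real.sqrt (∑ j, γ j ^ 2)) ^ 2)
      ≤ 2 * c₅ / (∑ j, γ j ^ 2) := by
  classical
  set g : ℝ := ∑ j, γ j ^ 2 with hgdef
  have hg : 0 < g := by
    have : ∃ i, γ i ≠ 0 := by
      by_contra h
      push_neg at h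
      exact hγ (funext h)
    obtain ⟨i, hi⟩ := this
    exact Finset.sum_pos' (fun j _ => sq_nonneg _) ⟨i, Finset.mem_univ i, by positivity⟩
  set r : ℝ := Real.sqrt g with hrdef
  have hr : 0 < r := Real.sqrt_pos.mpr hg
  have hr2 : r ^ 2 = g := Real.sq_sqrt hg.le
  -- quadratic form formula
  have hquad : ∀ v : Fin N → ℝ,
      v ⬝ᵥ (C *ᵥ v) = (∑ i, γ i * v i) ^ 2 + ∑ i, σ i * v i ^ 2 := by
    intro v
    subst hC
    have hinner : ∀ i, (Matrix.of (fun i j => γ i * γ j + if i = j then σ i else 0) *ᵥ v) i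
        = γ i * (∑ j, γ j * v j) + σ i * v i := by
      intro i
      simp only [mulVec, dotProduct, of_apply, add_mul, Finset.sum_add_distrib,
        ite_mul, zero_mul, Finset.sum_ite_eq, Finset.mem_univ, if_true]
      rw [Finset.mul_sum]
      congr 1
      exact Finset.sum_congr rfl (fun j _ => by ring)
    simp only [dotProduct, hinner]
    rw [Finset.sum_congr rfl (fun i _ => by ring :
      ∀ i ∈ Finset.univ, v i * (γ i * (∑ j, γ j * v j) + σ i * v i)
        = (∑ j, γ j * v j) * (γ i * v i) + σ i * v i ^ 2)]
    rw [Finset.sum_add_distrib, ← Finset.mul_sum]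
    ring
  set t : ℝ := ∑ i, γ i * e1 i with htdef
  have ht : 0 ≤ t := hsign
  -- lam1 = t^2 + ∑ σ e1^2
  have hl1 : lam1 = t ^ 2 + ∑ i, σ i * e1 i ^ 2 := by
    have h1 : e1 ⬝ᵥ (C *ᵥ e1) = lam1 := by
      rw [heig, dotProduct_smul]
      simp only [smul_eq_mul, dotProduct]
      rw [Finset.sum_congr rfl (fun i _ => by ring :
        ∀ i ∈ Finset.univ, e1 i * e1 i = e1 i ^ 2), he1norm, mul_one]
    rw [← h1, hquad]
  have hsσ : (∑ i, σ i * e1 i ^ 2) ≤ c₅ := by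
    calc (∑ i, σ i * e1 i ^ 2) ≤ ∑ i, c₅ * e1 i ^ 2 :=
          Finset.sum_le_sum (fun i _ => mul_le_mul_of_nonneg_right (hσ i).2 (sq_nonneg _))
      _ = c₅ := by rw [← Finset.mul_sum, he1norm, mul_one]
  -- lower bound on lam1 via v = γ / r
  have hgle : g ≤ lam1 := by
    have hv : (∑ i, (γ i / r) ^ 2) = 1 := by
      rw [Finset.sum_congr rfl (fun i _ => div_pow _ _ _), ← Finset.sum_div, ← hgdef,
        ← hr2]
      field_simp
    have hmem : (fun i => γ i / r) ⬝ᵥ (C *ᵥ (fun i => γ i / r)) ∈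
        {x : ℝ | ∃ v : Fin N → ℝ, (∑ i, v i ^ 2) = 1 ∧ x = v ⬝ᵥ (C *ᵥ v)} :=
      ⟨fun i => γ i / r, hv, rfl⟩
    have hle := hmax.2 hmem
    rw [hquad] at hle
    have hγv : (∑ i, γ i * (γ i / r)) = r := by
      rw [Finset.sum_congr rfl (fun i _ => by ring :
        ∀ i ∈ Finset.univ, γ i * (γ i / r) = γ i ^ 2 / r), ← Finset.sum_div, ← hgdef,
        ← hr2]
      field_simp
    have hσv : 0 ≤ ∑ i, σ i * (γ i / r) ^ 2 :=
      Finset.sum_nonneg (fun i _ => mul_nonneg (hσ i).1.le (sq_nonneg _))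
    nlinarith [hle]
  have hc5 : 0 < c₅ := lt_of_lt_of_le (hσ ⟨0, by
      rcases Nat.eq_zero_or_pos N with h | h
      · exfalso; apply hγ; funext i; exact absurd i.2 (by omega)
      · exact h⟩).1 (hσ _).2
  have ht2 : g - c₅ ≤ t ^ 2 := by nlinarith [hl1, hsσ, hgle]
  -- expand LHS
  have hlhs : (∑ i, (e1 i - γ i / r) ^ 2) = 2 - 2 * t / r := by
    rw [Finset.sum_congr rfl (fun i _ => by ring :
      ∀ i ∈ Finset.univ, (e1 i - γ i / r) ^ 2
        = e1 i ^ 2 - 2 / r * (γ i * e1 i) + γ i ^ 2 / r ^ 2)]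
    rw [Finset.sum_add_distrib, Finset.sum_sub_distrib, ← Finset.mul_sum, ← htdef,
      he1norm, ← Finset.sum_div, ← hgdef, hr2]
    field_simp
    ring
  rw [hlhs]
  rw [le_div_iff₀ hg, ← hr2]
  have hexp : (2 - 2 * t / r) * r ^ 2 = 2 * r ^ 2 - 2 * t * r := by
    field_simp
  rw [hexp]
  rcases le_or_gt t r with h | h
  · nlinarith [mul_nonneg ht (sub_nonneg.mpr h)]
  · nlinarith [mul_pos hr (sub_pos.mpr h)]
end

section
/- Let C = γγᵀ + Λ with Λ diagonal, entries in (0, c₅], and let 𝔢₁,...,𝔢_N be an orthonormal eigenbasis of C with γᵀ𝔢₁ ≥ 0. If ‖γ‖² ≥ 2c₅, then for every i ≥ 2, |γᵀ𝔢ᵢ| ≤ ‖γ‖ · ‖γ/‖γ‖ − 𝔢₁‖ ≤ √(2c₅). -/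
open Matrix Finset

/-- For `C = γγᵀ + Λ` with `Λ` diagonal, entries in `(0, c₅]`, and an
orthonormal eigenbasis `𝔢₁,...,𝔢_N` of `C` ordered by decreasing eigenvalues with
`γᵀ𝔢₁ ≥ 0`: if `‖γ‖² ≥ 2c₅` then for all `i ≥ 2`,
`|γᵀ𝔢ᵢ| ≤ ‖γ‖·‖γ/‖γ‖ − 𝔢₁‖ ≤ √(2c₅)`. -/
theorem inner_gamma_lower_eigenvectors_bounded
    (N : ℕ) (γ : Fin N → ℝ) (σ : Fin N → ℝ) (c₅ : ℝ)
    (hσ : ∀ i, 0 < σ i ∧ σ i ≤ c₅)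
    (hγ : γ ≠ 0)
    (C : Matrix (Fin N) (Fin N) ℝ)
    (hC : C = Matrix.of (fun i j => γ i * γ j + if i = j then σ i else 0))
    (e : Fin N → Fin N → ℝ) (lam : Fin N → ℝ)
    (horth : ∀ i j, (e i) ⬝ᵥ (e j) = if i = j then (1 : ℝ) else 0)
    (heig : ∀ i, C *ᵥ e i = lam i • e i)
    (hdec : Antitone lam)
    (hsign : ∀ h0 : 0 < N, 0 ≤ γ ⬝ᵥ e ⟨0, h0⟩)
    (hbig : 2 * c₅ ≤ ∑ j, γ j ^ 2) :
    ∀ h0 : 0 < N, ∀ i : Fin N, i ≠ ⟨0, h0⟩ →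
      |γ ⬝ᵥ e i| ≤ Real.sqrt (∑ j, γ j ^ 2) *
          Real.sqrt (∑ k, (γ k / Real.sqrt (∑ j, γ j ^ 2) - e ⟨0, h0⟩ k) ^ 2) ∧
      Real.sqrt (∑ j, γ j ^ 2) *
          Real.sqrt (∑ k, (γ k / Real.sqrt (∑ j, γ j ^ 2) - e ⟨0, h0⟩ k) ^ 2)
        ≤ Real.sqrt (2 * c₅) := by
  intro h0 i hi
  have hc5 : 0 < c₅ := lt_of_lt_of_le (hσ ⟨0, h0⟩).1 (hσ ⟨0, h0⟩).2
  set G : ℝ := ∑ j, γ j ^ 2 with hGdef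
  have hGpos : 0 < G := lt_of_lt_of_le (by linarith) hbig
  set r : ℝ := Real.sqrt G with hrdef
  have hrpos : 0 < r := Real.sqrt_pos.mpr hGpos
  have hr2 : r * r = G := Real.mul_self_sqrt hGpos.le
  set e0 : Fin N → ℝ := e ⟨0, h0⟩ with he0
  set t : ℝ := γ ⬝ᵥ e0 with htdef
  have ht0 : 0 ≤ t := hsign h0
  -- completeness relation
  have hcomp : ∀ k l, (∑ j, e j k * e j l) = if k = l then (1 : ℝ) else 0 := by
    have hEE : (Matrix.of e) * (Matrix.of e)ᵀ = 1 := by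
      ext a b
      simpa [Matrix.mul_apply, Matrix.one_apply, dotProduct] using horth a b
    have hEE' : (Matrix.of e)ᵀ * (Matrix.of e) = 1 := mul_eq_one_comm.mp hEE
    intro k l
    have := congrFun (congrFun hEE' k) l
    simpa [Matrix.mul_apply, Matrix.one_apply] using this
  -- explicit mulVec formula
  have hCv : ∀ v : Fin N → ℝ, ∀ k, (C *ᵥ v) k = γ k * (γ ⬝ᵥ v) + σ k * v k := by
    intro v k
    subst hC
    simp only [Matrix.mulVec, dotProduct, Matrix.of_apply]
    have : ∀ j, (γ k * γ j + if k = j then σ k else 0) * v j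
        = γ k * (γ j * v j) + (if k = j then σ k * v j else 0) := by
      intro j; split_ifs <;> ring
    rw [Finset.sum_congr rfl (fun j _ => this j), Finset.sum_add_distrib,
      Finset.sum_ite_eq, ← Finset.mul_sum]
    simp
  -- symmetric bilinear form
  have hsym : ∀ u v : Fin N → ℝ, u ⬝ᵥ (C *ᵥ v)
      = (γ ⬝ᵥ u) * (γ ⬝ᵥ v) + ∑ k, σ k * (u k * v k) := by
    intro u v
    have : ∀ k, u k * (C *ᵥ v) k
        = (γ k * u k) * (γ ⬝ᵥ v) + σ k * (u k * v k) := by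
      intro k; rw [hCv]; ring
    simp only [dotProduct]
    rw [Finset.sum_congr rfl (fun k _ => this k), Finset.sum_add_distrib, ← Finset.sum_mul]
    simp [dotProduct, mul_comm]
  have hue : ∀ (u : Fin N → ℝ) (j : Fin N), u ⬝ᵥ (C *ᵥ e j) = lam j * (u ⬝ᵥ e j) := by
    intro u j
    rw [heig j, dotProduct_smul, smul_eq_mul]
  -- basic orthonormality facts
  have he0e0 : e0 ⬝ᵥ e0 = 1 := by simpa using horth ⟨0, h0⟩ ⟨0, h0⟩
  have he0ei : e0 ⬝ᵥ e i = 0 := by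
    have := horth ⟨0, h0⟩ i
    rwa [if_neg (fun h => hi h.symm)] at this
  have heiei : e i ⬝ᵥ e i = 1 := by simpa using horth i i
  -- γ ⬝ γ = G
  have hgg : γ ⬝ᵥ γ = G := by
    simp [dotProduct, hGdef, sq]
  -- lam 0 = t² + S
  have hS_le : (∑ k, σ k * (e0 k * e0 k)) ≤ c₅ := by
    calc (∑ k, σ k * (e0 k * e0 k)) ≤ ∑ k, c₅ * (e0 k * e0 k) := by
          apply Finset.sum_le_sum
          intro k _
          exact mul_le_mul_of_nonneg_right (hσ k).2 (mul_self_nonneg _)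
      _ = c₅ * (e0 ⬝ᵥ e0) := by rw [← Finset.mul_sum]; rfl
      _ = c₅ := by rw [he0e0, mul_one]
  have hlam0 : lam ⟨0, h0⟩ = t * t + ∑ k, σ k * (e0 k * e0 k) := by
    have h1 := hsym e0 e0
    rw [hue e0 ⟨0, h0⟩, he0e0, mul_one] at h1
    have hge0 : γ ⬝ᵥ e0 = t := rfl
    rw [hge0] at h1
    exact h1
  -- expansion of γ in the eigenbasis
  have hexp : ∀ k, (∑ j, (γ ⬝ᵥ e j) * e j k) = γ k := by
    intro k
    calc (∑ j, (γ ⬝ᵥ e j) * e j k) = ∑ j, ∑ l, γ l * e j l * e j k := by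
          apply Finset.sum_congr rfl
          intro j _
          rw [dotProduct, Finset.sum_mul]
      _ = ∑ l, γ l * ∑ j, e j k * e j l := by
          rw [Finset.sum_comm]
          apply Finset.sum_congr rfl
          intro l _
          rw [Finset.mul_sum]
          apply Finset.sum_congr rfl
          intro j _; ring
      _ = γ k := by
          simp only [hcomp]
          simp [eq_comm]
  -- Parseval
  have hpars : (∑ j, (γ ⬝ᵥ e j) ^ 2) = G := by
    calc (∑ j, (γ ⬝ᵥ e j) ^ 2) = ∑ j, ∑ k, γ k * ((γ ⬝ᵥ e j) * e j k) := by
          apply Finset.sum_congr rfl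
          intro j _
          rw [sq]
          nth_rewrite 2 [dotProduct]
          rw [Finset.mul_sum]
          apply Finset.sum_congr rfl
          intro k _; ring
      _ = ∑ k, γ k * ∑ j, (γ ⬝ᵥ e j) * e j k := by
          rw [Finset.sum_comm]
          apply Finset.sum_congr rfl
          intro k _
          rw [Finset.mul_sum]
      _ = ∑ k, γ k * γ k := by
          apply Finset.sum_congr rfl
          intro k _
          rw [hexp k]
      _ = G := by simp [hGdef, sq]
  -- Rayleigh: γᵀCγ in two ways
  have hray : G * G + (∑ k, σ k * (γ k * γ k)) = ∑ j, lam j * (γ ⬝ᵥ e j) ^ 2 := by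
    have h1 : γ ⬝ᵥ (C *ᵥ γ) = G * G + ∑ k, σ k * (γ k * γ k) := by
      rw [hsym γ γ, hgg]
    have h2 : γ ⬝ᵥ (C *ᵥ γ) = ∑ j, lam j * (γ ⬝ᵥ e j) ^ 2 := by
      calc γ ⬝ᵥ (C *ᵥ γ) = ∑ k, (∑ j, (γ ⬝ᵥ e j) * e j k) * (C *ᵥ γ) k := by
            rw [dotProduct]
            exact (Finset.sum_congr rfl fun k _ => by rw [hexp k]).symm
        _ = ∑ j, (γ ⬝ᵥ e j) * (e j ⬝ᵥ (C *ᵥ γ)) := by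
            simp_rw [Finset.sum_mul]
            rw [Finset.sum_comm]
            apply Finset.sum_congr rfl
            intro j _
            have hh : (e j) ⬝ᵥ (C *ᵥ γ) = ∑ k, e j k * (C *ᵥ γ) k := rfl
            rw [hh, Finset.mul_sum]
            apply Finset.sum_congr rfl
            intro k _; ring
        _ = ∑ j, lam j * (γ ⬝ᵥ e j) ^ 2 := by
            apply Finset.sum_congr rfl
            intro j _
            have hswap : e j ⬝ᵥ (C *ᵥ γ) = γ ⬝ᵥ (C *ᵥ e j) := by
              rw [hsym, hsym]
              ring_nf
              congr 1
              apply Finset.sum_congr rfl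
              intro k _; ring
            rw [hswap, hue γ j]
            ring
    rw [← h1, h2]
  -- lam 0 ≥ G
  have hlamtop : G ≤ lam ⟨0, h0⟩ := by
    have h1 : (∑ j, lam j * (γ ⬝ᵥ e j) ^ 2) ≤ lam ⟨0, h0⟩ * G := by
      rw [← hpars, Finset.mul_sum]
      apply Finset.sum_le_sum
      intro j _
      exact mul_le_mul_of_nonneg_right (hdec (Fin.mk_le_of_le_val (Nat.zero_le _)))
        (sq_nonneg _)
    have h2 : 0 ≤ ∑ k, σ k * (γ k * γ k) :=
      Finset.sum_nonneg fun k _ => mul_nonneg (hσ k).1.le (mul_self_nonneg _)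
    have h3 : G * G ≤ lam ⟨0, h0⟩ * G := by linarith
    exact le_of_mul_le_mul_right (by linarith [h3]) hGpos
  -- t² ≥ G - c₅
  have ht2 : G - c₅ ≤ t * t := by
    have := hlam0
    nlinarith [hS_le, hlamtop]
  -- r * t ≥ G - c₅
  have hrt : G - c₅ ≤ r * t := by
    have h1 : Real.sqrt (G - c₅) ≤ t := by
      calc Real.sqrt (G - c₅) ≤ Real.sqrt (t * t) := Real.sqrt_le_sqrt ht2
        _ = t := Real.sqrt_mul_self ht0
    have h2 : Real.sqrt (G - c₅) * Real.sqrt (G - c₅) ≤ r * t := by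
      have hnn : 0 ≤ Real.sqrt (G - c₅) := Real.sqrt_nonneg _
      have h3 : Real.sqrt (G - c₅) ≤ r := Real.sqrt_le_sqrt (by linarith)
      exact mul_le_mul h3 h1 hnn hrpos.le
    rwa [Real.mul_self_sqrt (by linarith)] at h2
  -- compute s = 2 - 2 t / r, i.e. G * s = 2G - 2rt
  set s : ℝ := ∑ k, (γ k / r - e0 k) ^ 2 with hsdef
  have hsval : G * s = 2 * G - 2 * (r * t) := by
    have hrne : r ≠ 0 := hrpos.ne'
    have hGne : G ≠ 0 := hGpos.ne'
    have hexp2 : s = (∑ k, γ k * γ k) / (r * r) - 2 / r * (∑ k, γ k * e0 k)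
        + ∑ k, e0 k * e0 k := by
      rw [hsdef, Finset.sum_div, Finset.mul_sum, ← Finset.sum_sub_distrib,
        ← Finset.sum_add_distrib]
      apply Finset.sum_congr rfl
      intro k _
      field_simp
      ring
    have h1 : (∑ k, γ k * γ k) = G := by simp [hGdef, sq]
    have h2 : (∑ k, γ k * e0 k) = t := rfl
    have h3 : (∑ k, e0 k * e0 k) = 1 := he0e0
    rw [hexp2, h1, h2, h3, hr2, div_self hGne]
    have hGr : G / r = r := (div_eq_iff hrne).mpr hr2.symm
    have h4 : G * (2 / r * t) = 2 * (r * t) := by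
      have : G * (2 / r * t) = 2 * (G / r) * t := by ring
      rw [this, hGr]; ring
    linarith [h4]
  have hsnn : 0 ≤ s := Finset.sum_nonneg fun k _ => sq_nonneg _
  -- second inequality
  have hmain2 : r * Real.sqrt s ≤ Real.sqrt (2 * c₅) := by
    have h1 : r * Real.sqrt s = Real.sqrt (G * s) := by
      rw [Real.sqrt_mul hGpos.le]
    rw [h1]
    apply Real.sqrt_le_sqrt
    rw [hsval]
    linarith
  refine ⟨?_, hmain2⟩
  -- first inequality: Cauchy–Schwarz
  have hdot : γ ⬝ᵥ e i = r * ((fun k => γ k / r - e0 k) ⬝ᵥ e i) := by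
    have : (fun k => γ k / r - e0 k) ⬝ᵥ e i = (γ ⬝ᵥ e i) / r - (e0 ⬝ᵥ e i) := by
      simp only [dotProduct, Finset.sum_div, ← Finset.sum_sub_distrib]
      apply Finset.sum_congr rfl
      intro k _
      ring
    rw [this, he0ei, sub_zero]
    field_simp
  have hcs : |(fun k => γ k / r - e0 k) ⬝ᵥ e i| ≤ Real.sqrt s := by
    have hei2 : (∑ k, (e i k) ^ 2) = 1 := by
      have := heiei
      simpa [dotProduct, sq] using this
    have h1 : (fun k => γ k / r - e0 k) ⬝ᵥ e i
        ≤ Real.sqrt s * Real.sqrt (∑ k, (e i k) ^ 2) := by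
      exact Real.sum_mul_le_sqrt_mul_sqrt _ _ _
    have hs' : (∑ k, (e0 k - γ k / r) ^ 2) = s := by
      rw [hsdef]
      exact Finset.sum_congr rfl fun k _ => by ring
    have h2 : -((fun k => γ k / r - e0 k) ⬝ᵥ e i)
        ≤ Real.sqrt s * Real.sqrt (∑ k, (e i k) ^ 2) := by
      have h2' := Real.sum_mul_le_sqrt_mul_sqrt Finset.univ
        (fun k => e0 k - γ k / r) (e i)
      rw [hs'] at h2'
      refine le_trans (le_of_eq ?_) h2'
      simp only [dotProduct]
      rw [← Finset.sum_neg_distrib]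
      exact Finset.sum_congr rfl fun k _ => by ring
    rw [hei2, Real.sqrt_one, mul_one] at h1 h2
    exact abs_le.mpr ⟨by linarith, h1⟩
  calc |γ ⬝ᵥ e i| = r * |(fun k => γ k / r - e0 k) ⬝ᵥ e i| := by
        rw [hdot, abs_mul, abs_of_pos hrpos]
    _ ≤ r * Real.sqrt s := by
        exact mul_le_mul_of_nonneg_left hcs hrpos.le
end

section
/- Let C = γγᵀ + Λ with Λ diagonal, entries in (0, c₅]. For any unit eigenvector 𝔢ᵢ (i ≥ 2) of C with eigenvalue λᵢ, one has λᵢ = (γᵀ𝔢ᵢ)² + 𝔢ᵢᵀΛ𝔢ᵢ ≤ (γᵀ𝔢ᵢ)² + c₅. Combined with |γᵀ𝔢ᵢ| ≤ √(2c₅) (valid when ‖γ‖² ≥ 2c₅), this yields λᵢ ≤ 3c₅ for all i ≥ 2. -/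
open Matrix Finset

/-- For `C = γγᵀ + Λ` with `Λ` diagonal, entries in `(0, c₅]`, and a
unit eigenvector `𝔢` of `C` with eigenvalue `μ`, one has
`μ = (γᵀ𝔢)² + 𝔢ᵀΛ𝔢 ≤ (γᵀ𝔢)² + c₅`, and if moreover `|γᵀ𝔢| ≤ √(2c₅)`
(valid for the lower eigenvectors when `‖γ‖² ≥ 2c₅`), then `μ ≤ 3c₅`. -/
theorem lower_eigenvalues_bounded
    (N : ℕ) (γ : Fin N → ℝ) (σ : Fin N → ℝ) (c₅ : ℝ)
    (hσ : ∀ i, 0 < σ i ∧ σ i ≤ c₅)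
    (hγbig : 2 * c₅ ≤ ∑ j, γ j ^ 2)
    (C : Matrix (Fin N) (Fin N) ℝ)
    (hC : C = Matrix.of (fun i j => γ i * γ j + if i = j then σ i else 0))
    (e : Fin N → ℝ) (μ : ℝ)
    (hnorm : (∑ i, e i ^ 2) = 1)
    (heig : C *ᵥ e = μ • e) :
    μ = (γ ⬝ᵥ e) ^ 2 + ∑ k, σ k * e k ^ 2 ∧
    μ ≤ (γ ⬝ᵥ e) ^ 2 + c₅ ∧
    (|γ ⬝ᵥ e| ≤ Real.sqrt (2 * c₅) → μ ≤ 3 * c₅) := by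
  have hNe : Nonempty (Fin N) := by
    rcases Nat.eq_zero_or_pos N with h | h
    · subst h; simp at hnorm
    · exact ⟨⟨0, h⟩⟩
  obtain ⟨i0⟩ := hNe
  have hc₅ : 0 < c₅ := lt_of_lt_of_le (hσ i0).1 (hσ i0).2
  have hCe : ∀ i, (C *ᵥ e) i = γ i * (γ ⬝ᵥ e) + σ i * e i := by
    intro i
    subst hC
    simp only [Matrix.mulVec, Matrix.of_apply, dotProduct, add_mul, ite_mul,
      Finset.sum_add_distrib, Finset.mul_sum, mul_assoc]
    simp
  have hμ : μ = (γ ⬝ᵥ e) ^ 2 + ∑ k, σ k * e k ^ 2 := by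
    have h1 : ∑ i, e i * (C *ᵥ e) i = μ := by
      rw [heig]
      simp only [Pi.smul_apply, smul_eq_mul]
      calc ∑ i, e i * (μ * e i) = μ * ∑ i, e i ^ 2 := by
            rw [Finset.mul_sum]; congr 1; ext i; ring
        _ = μ := by rw [hnorm, mul_one]
    rw [← h1]
    simp only [hCe]
    have hx : ∀ x, e x * (γ x * (γ ⬝ᵥ e) + σ x * e x)
        = e x * γ x * (γ ⬝ᵥ e) + σ x * e x ^ 2 := fun x => by ring
    simp only [hx]
    rw [Finset.sum_add_distrib, ← Finset.sum_mul]
    congr 1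
    rw [show (∑ x, e x * γ x) = γ ⬝ᵥ e from by simp [dotProduct, mul_comm]]
    ring
  have hsum : ∑ k, σ k * e k ^ 2 ≤ c₅ := by
    calc ∑ k, σ k * e k ^ 2 ≤ ∑ k, c₅ * e k ^ 2 := by
          apply Finset.sum_le_sum
          intro k _
          exact mul_le_mul_of_nonneg_right (hσ k).2 (sq_nonneg _)
      _ = c₅ := by rw [← Finset.mul_sum, hnorm, mul_one]
  refine ⟨hμ, by linarith, fun habs => ?_⟩
  have h2 : (γ ⬝ᵥ e) ^ 2 ≤ 2 * c₅ := by
    have := Real.sq_sqrt (by linarith : (0:ℝ) ≤ 2 * c₅)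
    nlinarith [abs_nonneg (γ ⬝ᵥ e), sq_abs (γ ⬝ᵥ e)]
  linarith
end

section
/- Suppose E max_{1≤v≤z}|S_v|^6 ≤ c·z³ for all z ≥ 1, where S_v = ∑_{s=1}^v Y_s. Then there is a constant C (depending on c and ρ) such that for all u > 0 and all T ≥ 2, P(max_{1≤v≤T} v^{−1/2}|S_v| > u (log T)^{1/6}) ≤ C u^{−6}, and consequently E(max_{1≤v≤T} v^{−1/2}|S_v|)² ≤ C' (log T)^{1/3}. -/
open MeasureTheory Finset

lemma aux_biSup_nonneg {ι : Type*} (s : Finset ι) (f : ι → ℝ)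
    (hf : ∀ i, 0 ≤ f i) : 0 ≤ ⨆ i ∈ s, f i :=
  Real.iSup_nonneg fun i => Real.iSup_nonneg fun _ => hf i

lemma aux_biSup_le {ι : Type*} {s : Finset ι} {f : ι → ℝ} {a : ℝ} (ha : 0 ≤ a)
    (h : ∀ i ∈ s, f i ≤ a) : (⨆ i ∈ s, f i) ≤ a :=
  Real.iSup_le (fun i => Real.iSup_le (fun hi => h i hi) ha) ha

lemma aux_le_biSup {ι : Type*} {s : Finset ι} (f : ι → ℝ)
    {i : ι} (hi : i ∈ s) : f i ≤ ⨆ j ∈ s, f j := by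
  have hb : BddAbove (Set.range fun j => ⨆ _ : j ∈ s, f j) := by
    refine ((s.finite_toSet.image f).insert 0).bddAbove.mono ?_
    rintro _ ⟨j, rfl⟩
    show (⨆ _ : j ∈ s, f j) ∈ _
    by_cases hj : j ∈ s
    · rw [ciSup_pos (f := fun _ : j ∈ s => f j) hj]
      exact Set.mem_insert_of_mem _ ⟨j, hj, rfl⟩
    · haveI : IsEmpty (j ∈ s) := ⟨hj⟩
      rw [Real.iSup_of_isEmpty]
      exact Set.mem_insert _ _
  calc f i = ⨆ _ : i ∈ s, f i := (ciSup_pos (f := fun _ : i ∈ s => f i) hi).symm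
    _ ≤ ⨆ j ∈ s, f j := le_ciSup hb i

lemma aux_amgm {t a : ℝ} (ha : 0 < a) :
    t ^ 2 ≤ t ^ 6 * (3 * a ^ 2)⁻¹ + 2 * a / 3 := by
  rw [← sub_nonneg]
  have hE : t ^ 6 * (3 * a ^ 2)⁻¹ + 2 * a / 3 - t ^ 2
      = (t ^ 2 - a) ^ 2 * (t ^ 2 + 2 * a) / (3 * a ^ 2) := by
    field_simp
    ring
  rw [hE]
  positivity

/-- if `E max_{1≤v≤z}|S_v|^6 ≤ c z³` for all `z ≥ 1`, then there are
constants `C, C'` (depending on `c`) with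
`P(max_{1≤v≤T} v^{-1/2}|S_v| > u (log T)^{1/6}) ≤ C u^{-6}` for all `u > 0`, `T ≥ 2`,
and consequently `E(max_{1≤v≤T} v^{-1/2}|S_v|)² ≤ C' (log T)^{1/3}`. -/
theorem normalized_maximum_log_bound
    {Ω : Type*} [MeasurableSpace Ω] (μ : Measure Ω) [IsProbabilityMeasure μ]
    (Y : ℕ → Ω → ℝ) (hY : ∀ s, Measurable (Y s))
    (hint : ∀ n : ℕ, Integrable
      (fun ω => (⨆ v ∈ Finset.Icc 1 n, |∑ s ∈ Finset.Icc 1 v, Y s ω|) ^ 6) μ)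
    (c : ℝ) (hc : 0 < c)
    (hmom : ∀ z : ℕ, 1 ≤ z →
      (∫ ω, (⨆ v ∈ Finset.Icc 1 z, |∑ s ∈ Finset.Icc 1 v, Y s ω|) ^ 6 ∂μ)
        ≤ c * (z : ℝ) ^ 3) :
    ∃ C C' : ℝ, 0 < C ∧ 0 < C' ∧
      ∀ (T : ℕ), 2 ≤ T →
        (∀ u : ℝ, 0 < u →
          (μ {ω | u * Real.log T ^ ((1 : ℝ) / 6) <
              ⨆ v ∈ Finset.Icc 1 T,
                |∑ s ∈ Finset.Icc 1 v, Y s ω| / Real.sqrt v}).toReal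
            ≤ C * u⁻¹ ^ 6) ∧
        (∫ ω, (⨆ v ∈ Finset.Icc 1 T,
            |∑ s ∈ Finset.Icc 1 v, Y s ω| / Real.sqrt v) ^ 2 ∂μ)
          ≤ C' * Real.log T ^ ((1 : ℝ) / 3) := by
  classical
  have hlog2 : (0:ℝ) < Real.log 2 := Real.log_pos (by norm_num)
  set C : ℝ := 16 * c / Real.log 2 with hCdef
  have hCpos : 0 < C := by positivity
  refine ⟨C, (C + 2) / 3, hCpos, by positivity, ?_⟩
  intro T hT
  -- basic notation
  set L : ℝ := Real.log T with hLdef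
  have hT1 : (1:ℝ) < (T:ℝ) := by exact_mod_cast lt_of_lt_of_le one_lt_two hT
  have hL : 0 < L := Real.log_pos hT1
  set K : ℕ := Nat.clog 2 T with hKdef
  have hK1 : 1 ≤ K := Nat.clog_pos one_lt_two hT
  have hKL : (K : ℝ) ≤ 2 * L / Real.log 2 := by
    rw [le_div_iff₀ hlog2]
    have h1 : (2:ℕ) ^ (K - 1) < T :=
      Nat.pow_pred_clog_lt_self one_lt_two (lt_of_lt_of_le one_lt_two hT)
    have h2 : ((K - 1 : ℕ) : ℝ) * Real.log 2 ≤ L := by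
      rw [← Real.log_pow]
      refine (Real.log_le_log_iff (by positivity) (by positivity)).2 ?_
      exact_mod_cast h1.le
    have h3 : Real.log 2 ≤ L := by
      refine (Real.log_le_log_iff (by norm_num) (by positivity)).2 ?_
      exact_mod_cast hT
    have h4 : ((K - 1 : ℕ) : ℝ) = (K : ℝ) - 1 := by
      push_cast [Nat.cast_sub hK1]
      ring
    rw [h4] at h2
    linarith
  -- abbreviations (as plain defs to keep goals readable)
  have hS : ∀ v : ℕ, Measurable fun ω => ∑ s ∈ Finset.Icc 1 v, Y s ω :=
    fun v => Finset.measurable_sum _ fun s _ => hY s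
  have habs_nonneg : ∀ (ω : Ω) (w : ℕ), 0 ≤ |∑ s ∈ Finset.Icc 1 w, Y s ω| :=
    fun ω w => abs_nonneg _
  have hMnonneg : ∀ (n : ℕ) (ω : Ω),
      0 ≤ ⨆ w ∈ Finset.Icc 1 n, |∑ s ∈ Finset.Icc 1 w, Y s ω| :=
    fun n ω => aux_biSup_nonneg _ _ (habs_nonneg ω)
  have hXnonneg : ∀ ω : Ω,
      0 ≤ ⨆ v ∈ Finset.Icc 1 T, |∑ s ∈ Finset.Icc 1 v, Y s ω| / Real.sqrt v :=
    fun ω => aux_biSup_nonneg _ _ (fun v => div_nonneg (abs_nonneg _) (Real.sqrt_nonneg _))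
  have hXmeas : Measurable fun ω =>
      ⨆ v ∈ Finset.Icc 1 T, |∑ s ∈ Finset.Icc 1 v, Y s ω| / Real.sqrt v := by
    refine Measurable.iSup fun v => Measurable.iSup_Prop _ ?_
    exact ((hS v).abs).div_const _
  -- the block index of v
  set k0 : ℕ → ℕ := fun v => max 1 (Nat.clog 2 v) with hk0def
  have hk0mem : ∀ v ∈ Finset.Icc 1 T, k0 v ∈ Finset.Icc 1 K := by
    intro v hv
    rw [Finset.mem_Icc] at hv ⊢
    refine ⟨le_max_left _ _, ?_⟩
    have h1 : Nat.clog 2 v ≤ K := Nat.clog_mono_right 2 hv.2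
    exact max_le hK1 h1
  have hvle : ∀ v : ℕ, 1 ≤ v → v ≤ 2 ^ k0 v := by
    intro v hv
    exact (Nat.le_pow_clog one_lt_two v).trans
      (Nat.pow_le_pow_right (by norm_num) (le_max_right _ _))
  have hlev : ∀ v : ℕ, 1 ≤ v → 2 ^ (k0 v - 1) ≤ v := by
    intro v hv
    rcases eq_or_lt_of_le hv with h | h
    · simp [hk0def, ← h]
    · have h2 : 1 ≤ Nat.clog 2 v := Nat.clog_pos one_lt_two h
      have : k0 v = Nat.clog 2 v := max_eq_right h2
      rw [this]
      exact (Nat.pow_pred_clog_lt_self one_lt_two h).le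
  -- key per-index bound
  have block : ∀ v ∈ Finset.Icc 1 T, ∀ ω : Ω,
      (|∑ s ∈ Finset.Icc 1 v, Y s ω| / Real.sqrt v) ^ 6 * 2 ^ (3 * (k0 v - 1)) ≤
        (⨆ w ∈ Finset.Icc 1 (2 ^ k0 v), |∑ s ∈ Finset.Icc 1 w, Y s ω|) ^ 6 := by
    intro v hv ω
    have hv1 : 1 ≤ v := (Finset.mem_Icc.1 hv).1
    have hvpos : (0:ℝ) < ((v:ℝ)) ^ 3 := by
      have : (1:ℝ) ≤ (v:ℝ) := by exact_mod_cast hv1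
      positivity
    have hsq : (Real.sqrt v) ^ 6 = ((v:ℝ)) ^ 3 := by
      rw [show (6:ℕ) = 2 * 3 from rfl, pow_mul, Real.sq_sqrt (by positivity)]
    have e1 : (|∑ s ∈ Finset.Icc 1 v, Y s ω| / Real.sqrt v) ^ 6
        = |∑ s ∈ Finset.Icc 1 v, Y s ω| ^ 6 / ((v:ℝ)) ^ 3 := by
      rw [div_pow, hsq]
    have e2 : (2:ℝ) ^ (3 * (k0 v - 1)) ≤ ((v:ℝ)) ^ 3 := by
      have hcast : ((2:ℝ)) ^ (k0 v - 1) ≤ (v:ℝ) := by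
        exact_mod_cast hlev v hv1
      calc (2:ℝ) ^ (3 * (k0 v - 1)) = ((2:ℝ) ^ (k0 v - 1)) ^ 3 := by
            rw [← pow_mul, mul_comm]
        _ ≤ ((v:ℝ)) ^ 3 := pow_le_pow_left₀ (by positivity) hcast 3
    have h6 : |∑ s ∈ Finset.Icc 1 v, Y s ω| ^ 6 ≤
        (⨆ w ∈ Finset.Icc 1 (2 ^ k0 v), |∑ s ∈ Finset.Icc 1 w, Y s ω|) ^ 6 := by
      refine pow_le_pow_left₀ (abs_nonneg _) ?_ 6
      exact aux_le_biSup (f := fun w => |∑ s ∈ Finset.Icc 1 w, Y s ω|) (Finset.mem_Icc.2 ⟨hv1, hvle v hv1⟩)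
    rw [e1]
    calc |∑ s ∈ Finset.Icc 1 v, Y s ω| ^ 6 / ((v:ℝ)) ^ 3 * 2 ^ (3 * (k0 v - 1))
        ≤ (⨆ w ∈ Finset.Icc 1 (2 ^ k0 v), |∑ s ∈ Finset.Icc 1 w, Y s ω|) ^ 6 / ((v:ℝ)) ^ 3
            * ((v:ℝ)) ^ 3 := by
          refine mul_le_mul ?_ e2 (by positivity) (by positivity)
          gcongr
      _ = _ := div_mul_cancel₀ _ hvpos.ne'
    -- Chebyshev bound for each block
  have hpow8 : ∀ k : ℕ, 1 ≤ k → ((2:ℝ)) ^ (3 * k) = 8 * 2 ^ (3 * (k - 1)) := by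
    intro k hk
    have h : 3 * k = 3 * (k - 1) + 3 := by omega
    rw [h, pow_add]
    ring
  have cheb : ∀ n : ℕ, 1 ≤ n → ∀ ε : ℝ, 0 < ε →
      (μ {ω | ε ≤ (⨆ w ∈ Finset.Icc 1 n, |∑ s ∈ Finset.Icc 1 w, Y s ω|) ^ 6}).toReal
        ≤ c * ((n:ℝ)) ^ 3 / ε := by
    intro n hn ε hε
    have h := mul_meas_ge_le_integral_of_nonneg (μ := μ)
      (f := fun ω => (⨆ w ∈ Finset.Icc 1 n, |∑ s ∈ Finset.Icc 1 w, Y s ω|) ^ 6)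
      (ae_of_all _ fun ω => pow_nonneg (hMnonneg n ω) 6) (hint n) ε
    rw [le_div_iff₀ hε, mul_comm]
    exact h.trans (hmom n hn)
  have hpow2k : ∀ k : ℕ, (((2 ^ k : ℕ) : ℝ)) ^ 3 = (2:ℝ) ^ (3 * k) := by
    intro k
    push_cast
    rw [← pow_mul, mul_comm]
  constructor
  · -- tail bound
    intro u hu
    set x : ℝ := u * Real.log T ^ ((1 : ℝ) / 6) with hxdef
    have hx : 0 < x := mul_pos hu (Real.rpow_pos_of_pos hL _)
    have hx6 : x ^ 6 = u ^ 6 * L := by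
      rw [hxdef, mul_pow]
      congr 1
      rw [← Real.rpow_natCast (L ^ ((1:ℝ)/6)) 6, ← Real.rpow_mul hL.le]
      norm_num
    set A : ℕ → Set Ω := fun k =>
      {ω | x ^ 6 * 2 ^ (3 * (k - 1)) ≤
        (⨆ w ∈ Finset.Icc 1 (2 ^ k), |∑ s ∈ Finset.Icc 1 w, Y s ω|) ^ 6} with hAdef
    have hEsub : {ω | x <
        ⨆ v ∈ Finset.Icc 1 T, |∑ s ∈ Finset.Icc 1 v, Y s ω| / Real.sqrt v} ⊆
        ⋃ k ∈ Finset.Icc 1 K, A k := by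
      intro ω hω
      simp only [Set.mem_setOf_eq] at hω
      have hex : ∃ v ∈ Finset.Icc 1 T, x < |∑ s ∈ Finset.Icc 1 v, Y s ω| / Real.sqrt v := by
        by_contra h
        push_neg at h
        exact absurd hω (not_lt.2 (aux_biSup_le hx.le h))
      obtain ⟨v, hv, hxv⟩ := hex
      refine Set.mem_iUnion₂.2 ⟨k0 v, hk0mem v hv, ?_⟩
      show x ^ 6 * 2 ^ (3 * (k0 v - 1)) ≤ _
      calc x ^ 6 * 2 ^ (3 * (k0 v - 1))
          ≤ (|∑ s ∈ Finset.Icc 1 v, Y s ω| / Real.sqrt v) ^ 6 * 2 ^ (3 * (k0 v - 1)) := by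
            gcongr
        _ ≤ _ := block v hv ω
    have hmeas1 : (μ {ω | x <
        ⨆ v ∈ Finset.Icc 1 T, |∑ s ∈ Finset.Icc 1 v, Y s ω| / Real.sqrt v}).toReal
        ≤ ∑ k ∈ Finset.Icc 1 K, (μ (A k)).toReal := by
      rw [← ENNReal.toReal_sum (fun k _ => measure_ne_top μ _)]
      refine ENNReal.toReal_mono ?_ ((measure_mono hEsub).trans (measure_biUnion_finset_le _ _))
      exact (ENNReal.sum_lt_top.2 fun k _ => measure_lt_top μ _).ne
    have hterm : ∀ k ∈ Finset.Icc 1 K, (μ (A k)).toReal ≤ 8 * c / x ^ 6 := by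
      intro k hk
      have hk1 : 1 ≤ k := (Finset.mem_Icc.1 hk).1
      have h := cheb (2 ^ k) Nat.one_le_two_pow (x ^ 6 * 2 ^ (3 * (k - 1))) (by positivity)
      refine h.trans (le_of_eq ?_)
      rw [hpow2k k, hpow8 k hk1]
      have h2 : ((2:ℝ)) ^ (3 * (k - 1)) ≠ 0 := by positivity
      field_simp
    have hsum : ∑ k ∈ Finset.Icc 1 K, (μ (A k)).toReal ≤ (K : ℝ) * (8 * c / x ^ 6) := by
      have := Finset.sum_le_card_nsmul (Finset.Icc 1 K) (fun k => (μ (A k)).toReal)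
        (8 * c / x ^ 6) hterm
      simpa [Nat.card_Icc, nsmul_eq_mul] using this
    have hfinal : (K : ℝ) * (8 * c / x ^ 6) ≤ C * u⁻¹ ^ 6 := by
      have hstep : (K : ℝ) * (8 * c / x ^ 6) ≤ (2 * L / Real.log 2) * (8 * c / x ^ 6) :=
        mul_le_mul_of_nonneg_right hKL (by positivity)
      refine hstep.trans (le_of_eq ?_)
      rw [hx6, hCdef]
      field_simp
      ring
    exact hmeas1.trans (hsum.trans hfinal)
  · -- L² bound
    set g : Ω → ℝ := fun ω => ∑ k ∈ Finset.Icc 1 K,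
      (⨆ w ∈ Finset.Icc 1 (2 ^ k), |∑ s ∈ Finset.Icc 1 w, Y s ω|) ^ 6 / 2 ^ (3 * (k - 1))
      with hgdef
    have hg_int : Integrable g μ :=
      integrable_finset_sum _ fun k _ => (hint (2 ^ k)).div_const _
    have hg_nonneg : ∀ ω, 0 ≤ g ω := by
      intro ω
      refine Finset.sum_nonneg fun k _ => div_nonneg (pow_nonneg (hMnonneg _ ω) 6) (by positivity)
    have hXg : ∀ ω, (⨆ v ∈ Finset.Icc 1 T,
        |∑ s ∈ Finset.Icc 1 v, Y s ω| / Real.sqrt v) ^ 6 ≤ g ω := by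
      intro ω
      have hgnn := hg_nonneg ω
      set t : ℝ := g ω ^ ((1:ℝ)/6) with htdef
      have ht6 : t ^ (6:ℕ) = g ω := by
        rw [htdef, ← Real.rpow_natCast (g ω ^ ((1:ℝ)/6)) 6, ← Real.rpow_mul hgnn]
        norm_num
      have htnn : 0 ≤ t := Real.rpow_nonneg hgnn _
      have hXt : (⨆ v ∈ Finset.Icc 1 T,
          |∑ s ∈ Finset.Icc 1 v, Y s ω| / Real.sqrt v) ≤ t := by
        refine aux_biSup_le htnn ?_
        intro v hv
        have h6 : (|∑ s ∈ Finset.Icc 1 v, Y s ω| / Real.sqrt v) ^ 6 ≤ t ^ (6:ℕ) := by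
          rw [ht6]
          have hb := block v hv ω
          have hdiv : (|∑ s ∈ Finset.Icc 1 v, Y s ω| / Real.sqrt v) ^ 6 ≤
              (⨆ w ∈ Finset.Icc 1 (2 ^ k0 v), |∑ s ∈ Finset.Icc 1 w, Y s ω|) ^ 6
                / 2 ^ (3 * (k0 v - 1)) :=
            (le_div_iff₀ (by positivity)).2 hb
          refine hdiv.trans ?_
          exact Finset.single_le_sum
            (f := fun k => (⨆ w ∈ Finset.Icc 1 (2 ^ k), |∑ s ∈ Finset.Icc 1 w, Y s ω|) ^ 6
              / 2 ^ (3 * (k - 1)))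
            (fun k _ => div_nonneg (pow_nonneg (hMnonneg _ ω) 6) (by positivity))
            (hk0mem v hv)
        exact le_of_pow_le_pow_left₀ (by norm_num) htnn h6
      calc (⨆ v ∈ Finset.Icc 1 T, |∑ s ∈ Finset.Icc 1 v, Y s ω| / Real.sqrt v) ^ 6
          ≤ t ^ 6 := pow_le_pow_left₀ (hXnonneg ω) hXt 6
        _ = g ω := ht6
    have hX6int : Integrable (fun ω => (⨆ v ∈ Finset.Icc 1 T,
        |∑ s ∈ Finset.Icc 1 v, Y s ω| / Real.sqrt v) ^ 6) μ := by
      refine hg_int.mono' (hXmeas.pow_const 6).aestronglyMeasurable (ae_of_all _ fun ω => ?_)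
      rw [Real.norm_eq_abs, abs_of_nonneg (pow_nonneg (hXnonneg ω) 6)]
      exact hXg ω
    have hX6 : (∫ ω, (⨆ v ∈ Finset.Icc 1 T,
        |∑ s ∈ Finset.Icc 1 v, Y s ω| / Real.sqrt v) ^ 6 ∂μ) ≤ C * L := by
      have h1 : (∫ ω, (⨆ v ∈ Finset.Icc 1 T,
          |∑ s ∈ Finset.Icc 1 v, Y s ω| / Real.sqrt v) ^ 6 ∂μ) ≤ ∫ ω, g ω ∂μ :=
        integral_mono_of_nonneg (ae_of_all _ fun ω => pow_nonneg (hXnonneg ω) 6)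
          hg_int (ae_of_all _ hXg)
      have h2 : (∫ ω, g ω ∂μ) = ∑ k ∈ Finset.Icc 1 K,
          (∫ ω, (⨆ w ∈ Finset.Icc 1 (2 ^ k), |∑ s ∈ Finset.Icc 1 w, Y s ω|) ^ 6 ∂μ)
            / 2 ^ (3 * (k - 1)) := by
        rw [hgdef, integral_finset_sum _ fun k _ => (hint (2 ^ k)).div_const _]
        exact Finset.sum_congr rfl fun k _ => integral_div _ _
      have h3 : ∑ k ∈ Finset.Icc 1 K,
          (∫ ω, (⨆ w ∈ Finset.Icc 1 (2 ^ k), |∑ s ∈ Finset.Icc 1 w, Y s ω|) ^ 6 ∂μ)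
            / 2 ^ (3 * (k - 1)) ≤ (K:ℝ) * (8 * c) := by
        have hb : ∀ k ∈ Finset.Icc 1 K,
            (∫ ω, (⨆ w ∈ Finset.Icc 1 (2 ^ k), |∑ s ∈ Finset.Icc 1 w, Y s ω|) ^ 6 ∂μ)
              / 2 ^ (3 * (k - 1)) ≤ 8 * c := by
          intro k hk
          have hk1 : 1 ≤ k := (Finset.mem_Icc.1 hk).1
          have hm := hmom (2 ^ k) Nat.one_le_two_pow
          rw [div_le_iff₀ (by positivity)]
          refine hm.trans (le_of_eq ?_)
          rw [hpow2k k, hpow8 k hk1]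
          ring
        have := Finset.sum_le_card_nsmul (Finset.Icc 1 K) _ (8 * c) hb
        simpa [Nat.card_Icc, nsmul_eq_mul] using this
      have h4 : (K:ℝ) * (8 * c) ≤ C * L := by
        have := mul_le_mul_of_nonneg_right hKL (by positivity : (0:ℝ) ≤ 8 * c)
        refine this.trans (le_of_eq ?_)
        rw [hCdef]
        field_simp
        ring
      rw [h2] at h1
      exact h1.trans (h3.trans h4)
    -- conclude via AM-GM
    set a : ℝ := Real.log T ^ ((1:ℝ)/3) with hadef
    have ha : 0 < a := Real.rpow_pos_of_pos hL _
    have ha3 : a ^ (3:ℕ) = L := by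
      rw [hadef, ← Real.rpow_natCast (Real.log T ^ ((1:ℝ)/3)) 3, ← Real.rpow_mul hL.le]
      norm_num
    have h5 : (∫ ω, (⨆ v ∈ Finset.Icc 1 T,
        |∑ s ∈ Finset.Icc 1 v, Y s ω| / Real.sqrt v) ^ 2 ∂μ)
        ≤ ∫ ω, ((⨆ v ∈ Finset.Icc 1 T,
          |∑ s ∈ Finset.Icc 1 v, Y s ω| / Real.sqrt v) ^ 6 * (3 * a ^ 2)⁻¹ + 2 * a / 3) ∂μ :=
      integral_mono_of_nonneg (ae_of_all _ fun ω => sq_nonneg _)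
        ((hX6int.mul_const _).add (integrable_const _))
        (ae_of_all _ fun ω => aux_amgm ha)
    have h6 : (∫ ω, ((⨆ v ∈ Finset.Icc 1 T,
        |∑ s ∈ Finset.Icc 1 v, Y s ω| / Real.sqrt v) ^ 6 * (3 * a ^ 2)⁻¹ + 2 * a / 3) ∂μ)
        = (∫ ω, (⨆ v ∈ Finset.Icc 1 T,
          |∑ s ∈ Finset.Icc 1 v, Y s ω| / Real.sqrt v) ^ 6 ∂μ) * (3 * a ^ 2)⁻¹
            + 2 * a / 3 := by
      rw [integral_add (hX6int.mul_const _) (integrable_const _), integral_mul_const,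
        integral_const, probReal_univ]
      simp
    have h7 : (∫ ω, (⨆ v ∈ Finset.Icc 1 T,
        |∑ s ∈ Finset.Icc 1 v, Y s ω| / Real.sqrt v) ^ 6 ∂μ) * (3 * a ^ 2)⁻¹
          + 2 * a / 3 ≤ (C + 2) / 3 * a := by
      have hmul : (∫ ω, (⨆ v ∈ Finset.Icc 1 T,
          |∑ s ∈ Finset.Icc 1 v, Y s ω| / Real.sqrt v) ^ 6 ∂μ) * (3 * a ^ 2)⁻¹
            ≤ (C * L) * (3 * a ^ 2)⁻¹ :=
        mul_le_mul_of_nonneg_right hX6 (by positivity)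
      have heq : (C * L) * (3 * a ^ 2)⁻¹ = C * a / 3 := by
        rw [← ha3]
        field_simp
      rw [heq] at hmul
      linarith
    rw [h6] at h5
    exact h5.trans h7
end
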